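/- Let m, q ≥ 1 be integers, set N = m + q + 3, and work in ℝ^N with its standard basis e_1, …, e_N and standard inner product. Let Θ = {e_i − e_{i+1} : 1 ≤ i ≤ m} ∪ {e_i − e_{i+1} : m+3 ≤ i ≤ N−1} (two type-A components of sizes m and q separated by a gap of two consecutive simple roots), and let p be the orthogonal projection onto the orthogonal complement of the linear span of Θ. Then for the two consecutive simple roots α = e_{m+1} − e_{m+2} and β = e_{m+2} − e_{m+3}, which lie outside Θ, one has p(α) = (1/(m+1))(e_1 + ⋯ + e_{m+1}) − e_{m+2} and p(β) = e_{m+2} − (1/(q+1))(e_{m+3} + ⋯ + e_N); consequently ⟨p(α), p(β)⟩ = −1, ‖p(α)‖² = 1 + 1/(m+1), ‖p(β)‖² = 1 + 1/(q+1), and neither of the Cartan numbers 2⟨p(α), p(β)⟩/‖p(β)‖² = −2(q+1)/(q+2) and 2⟨p(α), p(β)⟩/‖p(α)‖² = −2(m+1)/(m+2) is an integer. In particular the pair (p(α), p(β)) violates the crystallographic integrality condition, so p(α) and p(β) cannot both belong to a root system. -/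

import Mathlib

/-- The `i`-th standard basis vector of `ℝ^N`. -/
noncomputable def esingle (N : ℕ) (i : Fin N) : EuclideanSpace ℝ (Fin N) :=
  EuclideanSpace.single i 1

/-- With `N = m + q + 3`, the set `Θ` consisting of the simple roots
`e_i - e_{i+1}` for `1 ≤ i ≤ m` and for `m + 3 ≤ i ≤ N - 1` (1-based), i.e. in 0-based
indexing: the pairs with first index `< m` or `≥ m + 2`.  These are two type-A components
of sizes `m` and `q` separated by a gap of two consecutive simple roots. -/
noncomputable def thetaSet (m q : ℕ) : Set (EuclideanSpace ℝ (Fin (m + q + 3))) :=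
  {v | ∃ (i : ℕ) (h : i + 1 < m + q + 3),
    (i < m ∨ m + 2 ≤ i) ∧
    v = esingle (m + q + 3) ⟨i, by omega⟩ - esingle (m + q + 3) ⟨i + 1, h⟩}

/-- Candidate for the projection of `α`. -/
noncomputable def valpha (m q : ℕ) : EuclideanSpace ℝ (Fin (m + q + 3)) :=
  WithLp.toLp 2 fun (j : Fin (m + q + 3)) => if (j : ℕ) ≤ m then 1 / ((m : ℝ) + 1)
    else if (j : ℕ) = m + 1 then -1 else 0

/-- Candidate for the projection of `β`. -/
noncomputable def vbeta (m q : ℕ) : EuclideanSpace ℝ (Fin (m + q + 3)) :=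
  WithLp.toLp 2 fun (j : Fin (m + q + 3)) => if (j : ℕ) = m + 1 then 1
    else if m + 2 ≤ (j : ℕ) then -(1 / ((q : ℝ) + 1)) else 0

lemma mem_orthogonal_span_of {E : Type*} [NormedAddCommGroup E] [InnerProductSpace ℝ E]
    {S : Set E} {v : E} (h : ∀ u ∈ S, (inner ℝ u v : ℝ) = 0) :
    v ∈ (Submodule.span ℝ S)ᗮ := by
  rw [Submodule.mem_orthogonal]
  intro u hu
  induction hu using Submodule.span_induction with
  | mem x hx => exact h x hx
  | zero => simp
  | add x y _ _ hx hy => simp [inner_add_left, hx, hy]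
  | smul c x _ hx => simp [inner_smul_left, hx]

lemma sum_delta (L a n : ℕ) (c : ℕ → ℝ) :
    (∑ i ∈ Finset.range L, if n = a + i then c i else 0)
      = if a ≤ n ∧ n < a + L then c (n - a) else 0 := by
  by_cases h : a ≤ n ∧ n < a + L
  · rw [Finset.sum_eq_single (n - a)]
    · rw [if_pos (by omega), if_pos h]
    · intro i hi hne
      simp only [Finset.mem_range] at hi
      rw [if_neg (by omega)]
    · intro hmem
      simp only [Finset.mem_range] at hmem
      omega
  · rw [if_neg h]
    refine Finset.sum_eq_zero fun i hi => ?_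
    simp only [Finset.mem_range] at hi
    rw [if_neg (by omega)]

lemma sum_pair (L a n : ℕ) (c : ℕ → ℝ) :
    (∑ i ∈ Finset.range L,
        c i * ((if n = a + i then (1 : ℝ) else 0) - (if n = a + 1 + i then 1 else 0)))
      = (if a ≤ n ∧ n < a + L then c (n - a) else 0)
        - (if a + 1 ≤ n ∧ n < a + 1 + L then c (n - (a + 1)) else 0) := by
  simp only [mul_sub, mul_ite, mul_one, mul_zero, Finset.sum_sub_distrib]
  rw [sum_delta L a n c, sum_delta L (a + 1) n c]

lemma valpha_orth (m q : ℕ) : valpha m q ∈ (Submodule.span ℝ (thetaSet m q))ᗮ := by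
  refine mem_orthogonal_span_of fun u hu => ?_
  obtain ⟨i, h, hcond, rfl⟩ := hu
  simp only [esingle, inner_sub_left, EuclideanSpace.inner_single_left, map_one, one_mul]
  show (if i ≤ m then 1 / ((m : ℝ) + 1) else if i = m + 1 then -1 else 0)
      - (if i + 1 ≤ m then 1 / ((m : ℝ) + 1) else if i + 1 = m + 1 then -1 else 0) = 0
  rcases hcond with h1 | h1
  · rw [if_pos (by omega), if_pos (by omega)]; ring
  · rw [if_neg (by omega), if_neg (by omega), if_neg (by omega), if_neg (by omega)]; ring

lemma vbeta_orth (m q : ℕ) : vbeta m q ∈ (Submodule.span ℝ (thetaSet m q))ᗮ := by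
  refine mem_orthogonal_span_of fun u hu => ?_
  obtain ⟨i, h, hcond, rfl⟩ := hu
  simp only [esingle, inner_sub_left, EuclideanSpace.inner_single_left, map_one, one_mul]
  show (if i = m + 1 then (1 : ℝ) else if m + 2 ≤ i then -(1 / ((q : ℝ) + 1)) else 0)
      - (if i + 1 = m + 1 then (1 : ℝ)
          else if m + 2 ≤ i + 1 then -(1 / ((q : ℝ) + 1)) else 0) = 0
  rcases hcond with h1 | h1
  · rw [if_neg (by omega), if_neg (by omega), if_neg (by omega), if_neg (by omega)]; ring
  · rw [if_neg (by omega), if_pos (by omega), if_neg (by omega), if_pos (by omega)]; ring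

lemma lt_aux1 (m q : ℕ) : m + 1 < m + q + 3 := by omega

lemma lt_aux2 (m q : ℕ) : m + 2 < m + q + 3 := by omega

lemma alpha_sub_mem (m q : ℕ) (hm : 1 ≤ m) :
    esingle (m + q + 3) ⟨m, by omega⟩ - esingle (m + q + 3) ⟨m + 1, lt_aux1 m q⟩
      - valpha m q ∈ Submodule.span ℝ (thetaSet m q) := by
  have key : esingle (m + q + 3) ⟨m, by omega⟩ - esingle (m + q + 3) ⟨m + 1, lt_aux1 m q⟩
      - valpha m q
      = ∑ i : Fin m, (-(((i : ℕ) : ℝ) + 1) / ((m : ℝ) + 1)) •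
          (esingle (m + q + 3) ⟨(i : ℕ), by omega⟩
            - esingle (m + q + 3) ⟨(i : ℕ) + 1, by omega⟩) := by
    ext j
    have hsum : (∑ i : Fin m, (-(((i : ℕ) : ℝ) + 1) / ((m : ℝ) + 1)) •
          (esingle (m + q + 3) ⟨(i : ℕ), by omega⟩
            - esingle (m + q + 3) ⟨(i : ℕ) + 1, by omega⟩)) j
        = ∑ i : Fin m, (-(((i : ℕ) : ℝ) + 1) / ((m : ℝ) + 1)) *
            ((if (j : ℕ) = 0 + (i : ℕ) then (1 : ℝ) else 0)
              - (if (j : ℕ) = 0 + 1 + (i : ℕ) then 1 else 0)) := by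
      rw [WithLp.ofLp_sum, Finset.sum_apply]
      refine Finset.sum_congr rfl fun i _ => ?_
      simp only [PiLp.smul_apply, PiLp.sub_apply, esingle, EuclideanSpace.single_apply,
        Fin.ext_iff, smul_eq_mul]
      rw [show (0 : ℕ) + (i : ℕ) = (i : ℕ) by omega,
        show (0 : ℕ) + 1 + (i : ℕ) = (i : ℕ) + 1 by omega]
    rw [PiLp.sub_apply, PiLp.sub_apply, hsum,
      Fin.sum_univ_eq_sum_range (fun i : ℕ => (-((i : ℝ) + 1) / ((m : ℝ) + 1)) *
        ((if (j : ℕ) = 0 + i then (1 : ℝ) else 0) - (if (j : ℕ) = 0 + 1 + i then 1 else 0))),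
      sum_pair m 0 (j : ℕ) (fun i : ℕ => -((i : ℝ) + 1) / ((m : ℝ) + 1))]
    simp only [esingle, EuclideanSpace.single_apply, Fin.ext_iff]
    show (if (j : ℕ) = m then (1:ℝ) else 0) - (if (j : ℕ) = m + 1 then (1:ℝ) else 0)
        - (if (j : ℕ) ≤ m then 1 / ((m : ℝ) + 1) else if (j : ℕ) = m + 1 then -1 else 0) = _
    set n := (j : ℕ) with hn
    clear_value n
    have hm1 : ((m : ℝ) + 1) ≠ 0 := by positivity
    by_cases h0 : n = 0
    · rw [if_neg (show ¬(n = m) by omega), if_neg (show ¬(n = m + 1) by omega),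
        if_pos (show n ≤ m by omega), if_pos (show 0 ≤ n ∧ n < 0 + m by omega),
        if_neg (show ¬(0 + 1 ≤ n ∧ n < 0 + 1 + m) by omega), h0]
      norm_num
      rw [neg_div, one_div]
    by_cases h1 : n < m
    · rw [if_neg (show ¬(n = m) by omega), if_neg (show ¬(n = m + 1) by omega),
        if_pos (show n ≤ m by omega), if_pos (show 0 ≤ n ∧ n < 0 + m by omega),
        if_pos (show 0 + 1 ≤ n ∧ n < 0 + 1 + m by omega),
        show n - 0 = n by omega, show n - (0 + 1) = n - 1 by omega,
        show ((n - 1 : ℕ) : ℝ) = (n : ℝ) - 1 by rw [Nat.cast_sub (by omega)]; norm_num]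
      field_simp
      ring
    by_cases h2 : n = m
    · rw [if_pos h2, if_neg (show ¬(n = m + 1) by omega),
        if_pos (show n ≤ m by omega), if_neg (show ¬(0 ≤ n ∧ n < 0 + m) by omega),
        if_pos (show 0 + 1 ≤ n ∧ n < 0 + 1 + m by omega),
        show n - (0 + 1) = m - 1 by omega,
        show ((m - 1 : ℕ) : ℝ) = (m : ℝ) - 1 by rw [Nat.cast_sub (by omega)]; norm_num]
      field_simp
      ring
    · have hAB : ¬(0 ≤ n ∧ n < 0 + m) := by omega
      have hCD : ¬(0 + 1 ≤ n ∧ n < 0 + 1 + m) := by omega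
      by_cases h3 : n = m + 1
      · rw [if_neg (show ¬(n = m) by omega), if_pos h3,
          if_neg (show ¬(n ≤ m) by omega), if_pos h3, if_neg hAB, if_neg hCD]
        ring
      · rw [if_neg (show ¬(n = m) by omega), if_neg h3,
          if_neg (show ¬(n ≤ m) by omega), if_neg h3, if_neg hAB, if_neg hCD]
        ring
  rw [key]
  refine Submodule.sum_mem _ fun i _ => Submodule.smul_mem _ _ (Submodule.subset_span ?_)
  exact ⟨(i : ℕ), by omega, Or.inl i.2, rfl⟩

lemma beta_sub_mem (m q : ℕ) (hq : 1 ≤ q) :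
    esingle (m + q + 3) ⟨m + 1, lt_aux1 m q⟩ - esingle (m + q + 3) ⟨m + 2, lt_aux2 m q⟩
      - vbeta m q ∈ Submodule.span ℝ (thetaSet m q) := by
  have key : esingle (m + q + 3) ⟨m + 1, lt_aux1 m q⟩ - esingle (m + q + 3) ⟨m + 2, lt_aux2 m q⟩
      - vbeta m q
      = ∑ i : Fin q, ((((i : ℕ) : ℝ) - q) / ((q : ℝ) + 1)) •
          (esingle (m + q + 3) ⟨m + 2 + (i : ℕ), by omega⟩
            - esingle (m + q + 3) ⟨m + 2 + (i : ℕ) + 1, by omega⟩) := by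
    ext j
    have hsum : (∑ i : Fin q, ((((i : ℕ) : ℝ) - q) / ((q : ℝ) + 1)) •
          (esingle (m + q + 3) ⟨m + 2 + (i : ℕ), by omega⟩
            - esingle (m + q + 3) ⟨m + 2 + (i : ℕ) + 1, by omega⟩)) j
        = ∑ i : Fin q, ((((i : ℕ) : ℝ) - q) / ((q : ℝ) + 1)) *
            ((if (j : ℕ) = m + 2 + (i : ℕ) then (1 : ℝ) else 0)
              - (if (j : ℕ) = m + 2 + 1 + (i : ℕ) then 1 else 0)) := by
      rw [WithLp.ofLp_sum, Finset.sum_apply]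
      refine Finset.sum_congr rfl fun i _ => ?_
      simp only [PiLp.smul_apply, PiLp.sub_apply, esingle, EuclideanSpace.single_apply,
        Fin.ext_iff, smul_eq_mul]
      rw [show m + 2 + 1 + (i : ℕ) = m + 2 + (i : ℕ) + 1 by omega]
    rw [PiLp.sub_apply, PiLp.sub_apply, hsum,
      Fin.sum_univ_eq_sum_range (fun i : ℕ => (((i : ℝ) - q) / ((q : ℝ) + 1)) *
        ((if (j : ℕ) = m + 2 + i then (1 : ℝ) else 0)
          - (if (j : ℕ) = m + 2 + 1 + i then 1 else 0))),
      sum_pair q (m + 2) (j : ℕ) (fun i : ℕ => ((i : ℝ) - q) / ((q : ℝ) + 1))]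
    simp only [esingle, EuclideanSpace.single_apply, Fin.ext_iff]
    show (if (j : ℕ) = m + 1 then (1:ℝ) else 0) - (if (j : ℕ) = m + 2 then (1:ℝ) else 0)
        - (if (j : ℕ) = m + 1 then 1 else if m + 2 ≤ (j : ℕ) then -(1 / ((q : ℝ) + 1)) else 0)
        = _
    have hjlt : (j : ℕ) < m + q + 3 := j.isLt
    set n := (j : ℕ) with hn
    clear_value n
    have hq1 : ((q : ℝ) + 1) ≠ 0 := by positivity
    by_cases h0 : n ≤ m + 1
    · have hD1 : ¬(m + 2 ≤ n ∧ n < m + 2 + q) := by omega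
      have hD2 : ¬(m + 2 + 1 ≤ n ∧ n < m + 2 + 1 + q) := by omega
      by_cases h0' : n = m + 1
      · rw [if_pos h0', if_neg (show ¬(n = m + 2) by omega), if_pos h0',
          if_neg hD1, if_neg hD2]
        ring
      · rw [if_neg h0', if_neg (show ¬(n = m + 2) by omega), if_neg h0',
          if_neg (show ¬(m + 2 ≤ n) by omega), if_neg hD1, if_neg hD2]
        ring
    · have hA : ¬(n = m + 1) := by omega
      by_cases h2 : n = m + 2
      · rw [if_neg hA, if_pos h2, if_neg hA, if_pos (show m + 2 ≤ n by omega),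
          if_pos (show m + 2 ≤ n ∧ n < m + 2 + q by omega),
          if_neg (show ¬(m + 2 + 1 ≤ n ∧ n < m + 2 + 1 + q) by omega),
          show n - (m + 2) = 0 by omega]
        push_cast
        field_simp
        ring
      by_cases h3 : n < m + 2 + q
      · rw [if_neg hA, if_neg h2, if_neg hA, if_pos (show m + 2 ≤ n by omega),
          if_pos (show m + 2 ≤ n ∧ n < m + 2 + q by omega),
          if_pos (show m + 2 + 1 ≤ n ∧ n < m + 2 + 1 + q by omega),
          show ((n - (m + 2) : ℕ) : ℝ) = (n : ℝ) - (m : ℝ) - 2 by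
            rw [Nat.cast_sub (by omega)]; push_cast; ring,
          show ((n - (m + 2 + 1) : ℕ) : ℝ) = (n : ℝ) - (m : ℝ) - 3 by
            rw [Nat.cast_sub (by omega)]; push_cast; ring]
        field_simp
        ring
      · have h4 : n = m + 2 + q := by omega
        rw [if_neg hA, if_neg h2, if_neg hA, if_pos (show m + 2 ≤ n by omega),
          if_neg (show ¬(m + 2 ≤ n ∧ n < m + 2 + q) by omega),
          if_pos (show m + 2 + 1 ≤ n ∧ n < m + 2 + 1 + q by omega),
          show n - (m + 2 + 1) = q - 1 by omega,
          show ((q - 1 : ℕ) : ℝ) = (q : ℝ) - 1 by rw [Nat.cast_sub (by omega)]; norm_num]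
        field_simp
        ring
  rw [key]
  refine Submodule.sum_mem _ fun i _ => Submodule.smul_mem _ _ (Submodule.subset_span ?_)
  exact ⟨m + 2 + (i : ℕ), by omega, Or.inr (by omega), rfl⟩

/-- With `m, q ≥ 1`, `N = m + q + 3`, `Θ` as above, `p` the orthogonal
projection onto the orthogonal complement of the span of `Θ`, and the two consecutive
simple roots `α = e_{m+1} - e_{m+2}` and `β = e_{m+2} - e_{m+3}` (1-based; both outside
`Θ`): the projections `p α` and `p β` are computed explicitly, their inner product is
`-1`, their squared norms are `1 + 1/(m+1)` and `1 + 1/(q+1)`, the two Cartan numbers are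
`-2(q+1)/(q+2)` and `-2(m+1)/(m+2)`, and neither Cartan number is an integer. -/
theorem statement13 (m q : ℕ) (hm : 1 ≤ m) (hq : 1 ≤ q)
    (p : EuclideanSpace ℝ (Fin (m + q + 3)) → EuclideanSpace ℝ (Fin (m + q + 3)))
    (hp : ∀ v, p v =
      (Submodule.orthogonalProjection (Submodule.span ℝ (thetaSet m q))ᗮ v :
        EuclideanSpace ℝ (Fin (m + q + 3))))
    (α β : EuclideanSpace ℝ (Fin (m + q + 3)))
    (hα : α = esingle (m + q + 3) ⟨m, by omega⟩ - esingle (m + q + 3) ⟨m + 1, by omega⟩)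
    (hβ : β = esingle (m + q + 3) ⟨m + 1, by omega⟩
        - esingle (m + q + 3) ⟨m + 2, by omega⟩) :
    (∀ j : Fin (m + q + 3),
      p α j = if (j : ℕ) ≤ m then 1 / ((m : ℝ) + 1)
        else if (j : ℕ) = m + 1 then -1 else 0) ∧
    (∀ j : Fin (m + q + 3),
      p β j = if (j : ℕ) = m + 1 then 1
        else if m + 2 ≤ (j : ℕ) then -(1 / ((q : ℝ) + 1)) else 0) ∧
    (inner ℝ (p α) (p β) : ℝ) = -1 ∧
    ‖p α‖ ^ 2 = 1 + 1 / ((m : ℝ) + 1) ∧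
    ‖p β‖ ^ 2 = 1 + 1 / ((q : ℝ) + 1) ∧
    2 * (inner ℝ (p α) (p β) : ℝ) / ‖p β‖ ^ 2 = -(2 * ((q : ℝ) + 1)) / ((q : ℝ) + 2) ∧
    2 * (inner ℝ (p α) (p β) : ℝ) / ‖p α‖ ^ 2 = -(2 * ((m : ℝ) + 1)) / ((m : ℝ) + 2) ∧
    ¬ (∃ z : ℤ, 2 * (inner ℝ (p α) (p β) : ℝ) / ‖p β‖ ^ 2 = (z : ℝ)) ∧
    ¬ (∃ z : ℤ, 2 * (inner ℝ (p α) (p β) : ℝ) / ‖p α‖ ^ 2 = (z : ℝ)) := by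
  have hm1 : ((m : ℝ) + 1) ≠ 0 := by positivity
  have hq1 : ((q : ℝ) + 1) ≠ 0 := by positivity
  have hm2 : ((m : ℝ) + 2) ≠ 0 := by positivity
  have hq2 : ((q : ℝ) + 2) ≠ 0 := by positivity
  have hpa : p α = valpha m q := by
    rw [hp, hα]
    exact Submodule.eq_starProjection_of_mem_orthogonal (valpha_orth m q)
      ((Submodule.span ℝ (thetaSet m q)).le_orthogonal_orthogonal (alpha_sub_mem m q hm))
  have hpb : p β = vbeta m q := by
    rw [hp, hβ]
    exact Submodule.eq_starProjection_of_mem_orthogonal (vbeta_orth m q)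
      ((Submodule.span ℝ (thetaSet m q)).le_orthogonal_orthogonal (beta_sub_mem m q hq))
  have hinner : (inner ℝ (p α) (p β) : ℝ) = -1 := by
    rw [hpa, hpb, PiLp.inner_apply]
    simp only [RCLike.inner_apply, conj_trivial]
    have key : ∀ i : Fin (m + q + 3), valpha m q i * vbeta m q i
        = if m + 1 = 0 + (i : ℕ) then (-1 : ℝ) else 0 := by
      intro i
      show ((if (i : ℕ) ≤ m then 1 / ((m : ℝ) + 1) else if (i : ℕ) = m + 1 then -1 else 0) *
        (if (i : ℕ) = m + 1 then 1 else if m + 2 ≤ (i : ℕ) then -(1 / ((q : ℝ) + 1)) else 0)) = _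
      split_ifs <;> first | omega | ring
    rw [Finset.sum_congr rfl fun i _ => (mul_comm _ _).trans (key i),
      Fin.sum_univ_eq_sum_range (fun i : ℕ => if m + 1 = 0 + i then (-1 : ℝ) else 0),
      sum_delta (m + q + 3) 0 (m + 1) (fun _ => (-1 : ℝ)), if_pos (by omega)]
  have hna : ‖p α‖ ^ 2 = 1 + 1 / ((m : ℝ) + 1) := by
    rw [← real_inner_self_eq_norm_sq, hpa, PiLp.inner_apply]
    simp only [RCLike.inner_apply, conj_trivial]
    have key : ∀ i : Fin (m + q + 3), valpha m q i * valpha m q i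
        = if (i : ℕ) ≤ m then (1 / ((m : ℝ) + 1)) ^ 2 else if (i : ℕ) = m + 1 then 1 else 0 := by
      intro i
      show ((if (i : ℕ) ≤ m then 1 / ((m : ℝ) + 1) else if (i : ℕ) = m + 1 then -1 else 0) *
        (if (i : ℕ) ≤ m then 1 / ((m : ℝ) + 1) else if (i : ℕ) = m + 1 then -1 else 0)) = _
      split_ifs <;> ring
    rw [Finset.sum_congr rfl fun i _ => key i,
      Fin.sum_univ_eq_sum_range
        (fun i : ℕ => if i ≤ m then (1 / ((m : ℝ) + 1)) ^ 2 else if i = m + 1 then 1 else 0)]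
    rw [← Finset.sum_subset (Finset.range_subset_range.mpr (show m + 2 ≤ m + q + 3 by omega))
      (fun x _ hx => by
        simp only [Finset.mem_range, not_lt] at hx
        rw [if_neg (by omega), if_neg (by omega)])]
    rw [Finset.sum_range_succ, if_neg (by omega), if_pos rfl,
      Finset.sum_congr rfl (fun x hx => by
        simp only [Finset.mem_range] at hx
        rw [if_pos (by omega)]),
      Finset.sum_const, Finset.card_range, nsmul_eq_mul]
    push_cast
    field_simp
    ring
  have hnb : ‖p β‖ ^ 2 = 1 + 1 / ((q : ℝ) + 1) := by
    rw [← real_inner_self_eq_norm_sq, hpb, PiLp.inner_apply]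
    simp only [RCLike.inner_apply, conj_trivial]
    have key : ∀ i : Fin (m + q + 3), vbeta m q i * vbeta m q i
        = if (i : ℕ) = m + 1 then 1
          else if m + 2 ≤ (i : ℕ) then (1 / ((q : ℝ) + 1)) ^ 2 else 0 := by
      intro i
      show ((if (i : ℕ) = m + 1 then 1 else if m + 2 ≤ (i : ℕ) then -(1 / ((q : ℝ) + 1)) else 0) *
        (if (i : ℕ) = m + 1 then 1 else if m + 2 ≤ (i : ℕ) then -(1 / ((q : ℝ) + 1)) else 0)) = _
      split_ifs <;> ring
    rw [Finset.sum_congr rfl fun i _ => key i,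
      Fin.sum_univ_eq_sum_range
        (fun i : ℕ => if i = m + 1 then (1 : ℝ)
          else if m + 2 ≤ i then (1 / ((q : ℝ) + 1)) ^ 2 else 0),
      Finset.range_eq_Ico,
      ← Finset.sum_Ico_consecutive _ (show 0 ≤ m + 1 by omega) (show m + 1 ≤ m + q + 3 by omega)]
    rw [Finset.sum_eq_zero (fun x hx => by
        simp only [Finset.mem_Ico] at hx
        rw [if_neg (by omega), if_neg (by omega)]), zero_add]
    rw [Finset.sum_eq_sum_Ico_succ_bot (by omega), if_pos rfl,
      Finset.sum_congr rfl (fun x hx => by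
        simp only [Finset.mem_Ico] at hx
        rw [if_neg (by omega), if_pos (by omega)]),
      Finset.sum_const, Nat.card_Ico, nsmul_eq_mul]
    rw [show m + q + 3 - (m + 1 + 1) = q + 1 by omega]
    push_cast
    field_simp
  refine ⟨fun j => by rw [hpa]; rfl, fun j => by rw [hpb]; rfl, hinner, hna, hnb, ?_, ?_, ?_, ?_⟩
  · rw [hinner, hnb]
    field_simp
    ring
  · rw [hinner, hna]
    field_simp
    ring
  · rintro ⟨z, hz⟩
    rw [hinner, hnb] at hz
    have hz' : -(2 * ((q : ℝ) + 1)) = (z : ℝ) * ((q : ℝ) + 2) := by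
      field_simp at hz
      linarith
    have hz'' : -(2 * ((q : ℤ) + 1)) = z * ((q : ℤ) + 2) := by exact_mod_cast hz'
    have hqz : (1 : ℤ) ≤ (q : ℤ) := by exact_mod_cast hq
    rcases le_or_gt z (-2) with h | h
    · nlinarith
    · have h' : -1 ≤ z := by omega
      nlinarith
  · rintro ⟨z, hz⟩
    rw [hinner, hna] at hz
    have hz' : -(2 * ((m : ℝ) + 1)) = (z : ℝ) * ((m : ℝ) + 2) := by
      field_simp at hz
      linarith
    have hz'' : -(2 * ((m : ℤ) + 1)) = z * ((m : ℤ) + 2) := by exact_mod_cast hz'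
    have hmz : (1 : ℤ) ≤ (m : ℤ) := by exact_mod_cast hm
    rcases le_or_gt z (-2) with h | h
    · nlinarith
    · have h' : -1 ≤ z := by omega
      nlinarith
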